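/- Let n be odd and let α be a monic real polynomial. Let T be a family of pairwise commuting n × n real matrices with α(T) = 0 for all T in the family. Then there exists a nonzero vector u ∈ ℝ^n that is a common eigenvector of all matrices in the family. -/

import Mathlib

open Polynomial Module Set

/-- A real polynomial with no real roots has even degree. -/
lemma even_natDegree_of_no_root :
    ∀ (d : ℕ) (p : ℝ[X]), p.natDegree = d → p ≠ 0 → (∀ r : ℝ, ¬ p.IsRoot r) →
      Even p.natDegree := by
  intro d
  induction d using Nat.strong_induction_on with
  | _ d ih =>
  intro p hd hp hroot
  rcases eq_or_ne p.natDegree 0 with h0 | h0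
  · simp [h0]
  have hunit : ¬ IsUnit p := fun hu => h0 (natDegree_eq_zero_of_isUnit hu)
  obtain ⟨q, hq, s, rfl⟩ : ∃ q, Irreducible q ∧ ∃ s, p = q * s := by
    obtain ⟨q, hq, hdvd⟩ := WfDvdMonoid.exists_irreducible_factor hunit hp
    exact ⟨q, hq, hdvd⟩
  have hq0 : q ≠ 0 := hq.ne_zero
  have hs0 : s ≠ 0 := fun h => hp (by simp [h])
  have hqroot : ∀ r : ℝ, ¬ q.IsRoot r := by
    intro r hr
    exact hroot r (by simp [IsRoot, hr.eq_zero])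
  have hqd2 : q.natDegree = 2 := by
    have hle : q.natDegree ≤ 2 := hq.natDegree_le_two
    have h1 : q.natDegree ≠ 1 := by
      intro h1
      obtain ⟨x, hx⟩ := exists_root_of_degree_eq_one
        (p := q) (by rw [degree_eq_natDegree hq0, h1]; rfl)
      exact hqroot x hx
    have h0' : 0 < q.natDegree := hq.natDegree_pos
    omega
  have hnd : (q * s).natDegree = q.natDegree + s.natDegree := natDegree_mul hq0 hs0
  have hslt : s.natDegree < d := by omega
  have hsroot : ∀ r : ℝ, ¬ s.IsRoot r := by
    intro r hr
    exact hroot r (by simp [IsRoot, hr.eq_zero])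
  have := ih s.natDegree hslt s rfl hs0 hsroot
  obtain ⟨k, hk⟩ := this
  rw [hnd, hqd2]
  exact ⟨k + 1, by omega⟩

/-- A nonzero real polynomial of odd degree has a real root of odd multiplicity. -/
lemma exists_odd_rootMultiplicity :
    ∀ (d : ℕ) (p : ℝ[X]), p.natDegree = d → p ≠ 0 → Odd p.natDegree →
      ∃ r : ℝ, Odd (p.rootMultiplicity r) := by
  intro d
  induction d using Nat.strong_induction_on with
  | _ d ih =>
  intro p hd hp hodd
  -- p has a real root since its degree is odd
  obtain ⟨r₀, hr₀⟩ : ∃ r : ℝ, p.IsRoot r := by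
    by_contra h
    push_neg at h
    have := even_natDegree_of_no_root p.natDegree p rfl hp h
    exact (Nat.not_even_iff_odd.mpr hodd) this
  set m := p.rootMultiplicity r₀ with hm
  have hm1 : 0 < m := (rootMultiplicity_pos hp).mpr hr₀
  rcases Nat.even_or_odd m with hme | hmo
  swap
  · exact ⟨r₀, hmo⟩
  -- m even: strip off (X - r₀)^m
  set t := p /ₘ (X - C r₀) ^ m with ht
  have hfac : (X - C r₀) ^ m * t = p := p.pow_mul_divByMonic_rootMultiplicity_eq r₀
  have ht0 : t ≠ 0 := by
    intro h
    rw [h, mul_zero] at hfac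
    exact hp hfac.symm
  have htr₀ : t.eval r₀ ≠ 0 := eval_divByMonic_pow_rootMultiplicity_ne_zero r₀ hp
  have hnd : p.natDegree = m + t.natDegree := by
    conv_lhs => rw [← hfac]
    rw [natDegree_mul (pow_ne_zero _ (X_sub_C_ne_zero r₀)) ht0, natDegree_pow, natDegree_X_sub_C, mul_one]
  have htodd : Odd t.natDegree := by
    rcases hodd with ⟨k, hk⟩
    rcases hme with ⟨j, hj⟩
    exact ⟨k - j, by omega⟩
  have htlt : t.natDegree < d := by omega
  obtain ⟨r, hr⟩ := ih t.natDegree htlt t rfl ht0 htodd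
  refine ⟨r, ?_⟩
  have hrr₀ : r ≠ r₀ := by
    intro h
    rw [h] at hr
    rw [rootMultiplicity_eq_zero (by simpa [IsRoot] using htr₀)] at hr
    exact (Nat.not_even_iff_odd.mpr hr) Even.zero
  have : p.rootMultiplicity r
      = ((X - C r₀) ^ m).rootMultiplicity r + t.rootMultiplicity r := by
    conv_lhs => rw [← hfac]
    exact rootMultiplicity_mul (by rw [hfac]; exact hp)
  rw [this, rootMultiplicity_eq_zero (by
    simp [IsRoot, sub_eq_zero, hrr₀])]
  simpa using hr

/-- Characteristic polynomial of `M - μ • 1` is the shift of that of `M`. -/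
lemma charpoly_sub_smul_one {m : ℕ} (M : Matrix (Fin m) (Fin m) ℝ) (μ : ℝ) :
    (M - μ • 1).charpoly = M.charpoly.comp (X + C μ) := by
  let f : ℝ[X] →+* ℝ[X] := eval₂RingHom C (X + C μ)
  have key : Matrix.charmatrix (M - μ • 1) = (Matrix.charmatrix M).map f := by
    ext i j
    by_cases hij : i = j
    · subst hij
      rw [Matrix.map_apply, Matrix.charmatrix_apply_eq, Matrix.charmatrix_apply_eq, map_sub,
        Matrix.sub_apply, Matrix.smul_apply, Matrix.one_apply_eq]
      simp only [f, coe_eval₂RingHom, eval₂_X, eval₂_C, smul_eq_mul, mul_one, map_sub]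
      ring
    · simp only [Matrix.charmatrix_apply_ne _ _ _ hij, Matrix.map_apply, Matrix.sub_apply,
        Matrix.smul_apply, Matrix.one_apply_ne hij, smul_eq_mul, mul_zero, sub_zero]
      rw [map_neg]
      simp [f]
  have : (Matrix.charmatrix M).map f = f.mapMatrix (Matrix.charmatrix M) := rfl
  rw [Matrix.charpoly, Matrix.charpoly, key, this, ← RingHom.map_det]
  rfl

/-- Characteristic polynomial of `φ - μ • 1` is the shift of that of `φ`. -/
lemma end_charpoly_sub_smul_one {V : Type*} [AddCommGroup V] [Module ℝ V]
    [FiniteDimensional ℝ V] (φ : Module.End ℝ V) (μ : ℝ) :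
    (φ - μ • 1 : Module.End ℝ V).charpoly = φ.charpoly.comp (X + C μ) := by
  let b := Module.finBasis ℝ V
  rw [← LinearMap.charpoly_toMatrix φ b, ← LinearMap.charpoly_toMatrix (φ - μ • 1 : Module.End ℝ V) b]
  have : LinearMap.toMatrix b b (φ - μ • 1 : Module.End ℝ V)
      = LinearMap.toMatrix b b φ - μ • 1 := by
    rw [map_sub, map_smul]
    congr 1
    congr 1
    exact LinearMap.toMatrix_one b
  rw [this, charpoly_sub_smul_one]

/-- The dimension of a maximal generalized eigenspace equals the algebraic multiplicity. -/
lemma finrank_maxGenEigenspace_eq_rootMultiplicity {V : Type*} [AddCommGroup V] [Module ℝ V]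
    [FiniteDimensional ℝ V] (φ : Module.End ℝ V) (μ : ℝ) :
    finrank ℝ (φ.maxGenEigenspace μ) = φ.charpoly.rootMultiplicity μ := by
  have h1 : φ.maxGenEigenspace μ = (φ - μ • 1 : Module.End ℝ V).maxGenEigenspace 0 := by
    ext x
    simp only [Module.End.mem_maxGenEigenspace, zero_smul, sub_zero]
  rw [h1, LinearMap.finrank_maxGenEigenspace_zero_eq, end_charpoly_sub_smul_one,
    rootMultiplicity_eq_natTrailingDegree]

/-- On an odd-dimensional real space, some maximal generalized eigenspace has odd dimension. -/
lemma exists_odd_finrank_maxGenEigenspace {V : Type*} [AddCommGroup V] [Module ℝ V]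
    [FiniteDimensional ℝ V] (φ : Module.End ℝ V) (h : Odd (finrank ℝ V)) :
    ∃ μ : ℝ, Odd (finrank ℝ (φ.maxGenEigenspace μ)) := by
  obtain ⟨r, hr⟩ := exists_odd_rootMultiplicity φ.charpoly.natDegree φ.charpoly rfl
    φ.charpoly_monic.ne_zero (by rwa [LinearMap.charpoly_natDegree])
  exact ⟨r, by rwa [finrank_maxGenEigenspace_eq_rootMultiplicity]⟩

theorem stmt_12 {n : ℕ} (hn : Odd n) (α : Polynomial ℝ) (hα : α.Monic)
    (𝒯 : Set (Matrix (Fin n) (Fin n) ℝ))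
    (hcomm : ∀ S ∈ 𝒯, ∀ T ∈ 𝒯, S * T = T * S)
    (hann : ∀ T ∈ 𝒯, Polynomial.aeval T α = 0) :
    ∃ u : Fin n → ℝ, u ≠ 0 ∧ ∀ T ∈ 𝒯, ∃ c : ℝ, T.mulVec u = c • u := by
  classical
  clear hα hann
  set φ : Matrix (Fin n) (Fin n) ℝ → Module.End ℝ (Fin n → ℝ) :=
    fun T => T.mulVecLin with hφ
  have hφmul : ∀ S T : Matrix (Fin n) (Fin n) ℝ, φ (S * T) = φ S * φ T := by
    intro S T
    rw [hφ]
    simp only [Matrix.mulVecLin_mul]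
    rfl
  have hφcomm : ∀ S ∈ 𝒯, ∀ T ∈ 𝒯, Commute (φ S) (φ T) := by
    intro S hS T hT
    show φ S * φ T = φ T * φ S
    rw [← hφmul, ← hφmul, hcomm S hS T hT]
  -- choose a minimal odd-dimensional invariant subspace U
  have hex : ∃ d : ℕ, ∃ p : Submodule ℝ (Fin n → ℝ),
      ((∀ T ∈ 𝒯, ∀ x ∈ p, (φ T) x ∈ p) ∧ Odd (finrank ℝ p)) ∧ finrank ℝ p = d := by
    refine ⟨n, ⊤, ⟨fun T _ x _ => Submodule.mem_top, ?_⟩, ?_⟩ <;>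
      simp [finrank_top, Module.finrank_pi, hn]
  obtain ⟨U, ⟨hUinv, hUodd⟩, hUrank⟩ := Nat.find_spec hex
  -- every T in 𝒯 acts on U as a scalar plus a nilpotent
  have step2 : ∀ T ∈ 𝒯, ∃ μ : ℝ,
      ∀ x ∈ U, ((φ T - μ • (1 : Module.End ℝ (Fin n → ℝ))) ^ (finrank ℝ U)) x = 0 := by
    intro T hT
    have hTU : ∀ x ∈ U, (φ T) x ∈ U := hUinv T hT
    set g : Module.End ℝ U := (φ T).restrict hTU with hg
    obtain ⟨μ, hμ⟩ := exists_odd_finrank_maxGenEigenspace g hUodd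
    refine ⟨μ, ?_⟩
    set W : Submodule ℝ (Fin n → ℝ) := (g.maxGenEigenspace μ).map U.subtype with hW
    have hWrank : finrank ℝ W = finrank ℝ (g.maxGenEigenspace μ) :=
      Submodule.finrank_map_subtype_eq U _
    have hWle : W ≤ U := Submodule.map_subtype_le _ _
    have hWinv : ∀ S ∈ 𝒯, ∀ x ∈ W, (φ S) x ∈ W := by
      intro S hS x hx
      obtain ⟨y, hy, rfl⟩ := hx
      have hSU : ∀ x ∈ U, (φ S) x ∈ U := hUinv S hS
      have hcSg : Commute g ((φ S).restrict hSU) :=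
        LinearMap.restrict_commute (hφcomm T hT S hS) hTU hSU
      have hmt := Module.End.mapsTo_maxGenEigenspace_of_comm hcSg μ
      exact ⟨(φ S).restrict hSU y, hmt hy, rfl⟩
    have hWU : W = U := by
      apply Submodule.eq_of_le_of_finrank_le hWle
      have hmin := Nat.find_min' hex ⟨W, ⟨hWinv, by rw [hWrank]; exact hμ⟩, rfl⟩
      omega
    have hmaxtop : g.maxGenEigenspace μ = ⊤ := by
      apply Submodule.map_injective_of_injective U.injective_subtype
      rw [Submodule.map_subtype_top]
      exact hWU
    have hgen : g.genEigenspace μ (finrank ℝ U : ℕ) = ⊤ := by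
      rw [← Module.End.maxGenEigenspace_eq_genEigenspace_finrank]
      exact hmaxtop
    have key : ∀ (k : ℕ) (y : U),
        ((((g - μ • 1) ^ k) y : U) : Fin n → ℝ)
          = ((φ T - μ • (1 : Module.End ℝ (Fin n → ℝ))) ^ k) (y : Fin n → ℝ) := by
      intro k
      induction k with
      | zero => intro y; simp
      | succ k ihk =>
        intro y
        have h1 : (((g - μ • 1) y : U) : Fin n → ℝ)
            = (φ T - μ • (1 : Module.End ℝ (Fin n → ℝ))) (y : Fin n → ℝ) := by
          simp [g, LinearMap.sub_apply, LinearMap.smul_apply, Module.End.one_apply,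
            LinearMap.restrict_coe_apply]
        calc ((((g - μ • 1) ^ (k + 1)) y : U) : Fin n → ℝ)
            = ((((g - μ • 1) ^ k) ((g - μ • 1) y) : U) : Fin n → ℝ) := by
              rw [pow_succ, Module.End.mul_apply]
          _ = ((φ T - μ • (1 : Module.End ℝ (Fin n → ℝ))) ^ k)
                (((g - μ • 1) y : U) : Fin n → ℝ) := ihk _
          _ = ((φ T - μ • (1 : Module.End ℝ (Fin n → ℝ))) ^ k)
                ((φ T - μ • (1 : Module.End ℝ (Fin n → ℝ))) (y : Fin n → ℝ)) := by rw [h1]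
          _ = _ := by rw [pow_succ, Module.End.mul_apply]
    intro x hx
    have hmem : (⟨x, hx⟩ : U) ∈ g.genEigenspace μ (finrank ℝ U : ℕ) := by
      rw [hgen]; trivial
    rw [Module.End.mem_genEigenspace_nat] at hmem
    have := key (finrank ℝ U) ⟨x, hx⟩
    rw [hmem] at this
    simpa using this.symm
  -- choose a minimal nonzero invariant subspace U' of U
  have hUne : U ≠ ⊥ := by
    intro h
    rw [h, finrank_bot] at hUodd
    simp at hUodd
  have hex2 : ∃ d : ℕ, ∃ p : Submodule ℝ (Fin n → ℝ),
      (p ≤ U ∧ (∀ T ∈ 𝒯, ∀ x ∈ p, (φ T) x ∈ p) ∧ p ≠ ⊥) ∧ finrank ℝ p = d :=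
    ⟨finrank ℝ U, U, ⟨le_rfl, hUinv, hUne⟩, rfl⟩
  obtain ⟨U', ⟨hU'le, hU'inv, hU'ne⟩, hU'rank⟩ := Nat.find_spec hex2
  have key : ∀ T ∈ 𝒯, ∃ c : ℝ, ∀ x ∈ U', (φ T) x = c • x := by
    intro T hT
    obtain ⟨μ, hnil⟩ := step2 T hT
    refine ⟨μ, ?_⟩
    set N : Module.End ℝ (Fin n → ℝ) := φ T - μ • 1 with hN
    have hNU' : Submodule.map N U' ≤ U' := by
      rintro _ ⟨x, hx, rfl⟩
      have hNx : N x = (φ T) x - μ • x := rfl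
      rw [hNx]
      exact U'.sub_mem (hU'inv T hT x hx) (U'.smul_mem μ hx)
    have hmap : Submodule.map N U' = ⊥ := by
      by_contra hne
      have hinv' : ∀ S ∈ 𝒯, ∀ x ∈ Submodule.map N U', (φ S) x ∈ Submodule.map N U' := by
        intro S hS x hx
        obtain ⟨y, hy, rfl⟩ := hx
        have hc : Commute (φ S) N := by
          exact (hφcomm S hS T hT).sub_right ((Commute.one_right (φ S)).smul_right μ)
        have hswap : (φ S) (N y) = N ((φ S) y) := by
          have := LinearMap.ext_iff.mp hc.eq y
          simpa [Module.End.mul_apply] using this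
        rw [hswap]
        exact ⟨(φ S) y, hU'inv S hS y hy, rfl⟩
      have hgeU' : finrank ℝ U' ≤ finrank ℝ (Submodule.map N U') := by
        have := Nat.find_min' hex2
          ⟨Submodule.map N U', ⟨le_trans hNU' hU'le, hinv', hne⟩, rfl⟩
        omega
      have heq : Submodule.map N U' = U' := Submodule.eq_of_le_of_finrank_le hNU' hgeU'
      have hiter : ∀ k : ℕ, Submodule.map (N ^ k) U' = U' := by
        intro k
        induction k with
        | zero => simp [pow_zero, Module.End.one_eq_id, Submodule.map_id]
        | succ k ihk =>
          rw [pow_succ, Module.End.mul_eq_comp, Submodule.map_comp, heq, ihk]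
      have hbot : Submodule.map (N ^ finrank ℝ U) U' = ⊥ := by
        rw [eq_bot_iff]
        rintro _ ⟨x, hx, rfl⟩
        simpa using hnil x (hU'le hx)
      exact hU'ne (by rw [← hiter (finrank ℝ U), hbot])
    intro x hx
    have hmem : N x ∈ (⊥ : Submodule ℝ (Fin n → ℝ)) := hmap ▸ ⟨x, hx, rfl⟩
    have hz : N x = 0 := by simpa using hmem
    have hz' : (φ T) x - μ • x = 0 := hz
    rw [sub_eq_zero] at hz'
    exact hz'
  obtain ⟨u, huU', hu0⟩ := Submodule.exists_mem_ne_zero_of_ne_bot hU'ne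
  refine ⟨u, hu0, ?_⟩
  intro T hT
  obtain ⟨c, hc⟩ := key T hT
  refine ⟨c, ?_⟩
  have := hc u huU'
  simpa [hφ, Matrix.mulVecLin_apply] using this
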